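/- Let A_1, …, A_m ∈ M_n(ℂ) and B_1, …, B_m ∈ M_n(ℂ) be two tuples of matrices such that each A_i and each B_i is diagonalizable, [A_i, A_j] = 0 and [B_i, B_j] = 0 for all i, j. Suppose that for every k ≥ 1 and every sequence of indices i_1, …, i_k ∈ {1, …, m}, Tr(A_{i_1} A_{i_2} ⋯ A_{i_k}) = Tr(B_{i_1} B_{i_2} ⋯ B_{i_k}). Then there exists g ∈ GL_n(ℂ) such that B_i = g A_i g^{-1} for all 1 ≤ i ≤ m. -/

import Mathlib

open Matrix MvPolynomial

/-- A complex square matrix is diagonalizable (semisimple) if it is conjugate to a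
diagonal matrix. -/
def Matrix.IsDiagonalizable {n : ℕ} (A : Matrix (Fin n) (Fin n) ℂ) : Prop :=
  ∃ P : Matrix (Fin n) (Fin n) ℂ, IsUnit P ∧ (P * A * P⁻¹).IsDiag

namespace GenTraceAux

variable {m n : ℕ}

lemma conj_mul' {P X Y : Matrix (Fin n) (Fin n) ℂ} (hPP' : P⁻¹ * P = 1) :
    (P * X * P⁻¹) * (P * Y * P⁻¹) = P * (X * Y) * P⁻¹ := by
  simp only [Matrix.mul_assoc]
  rw [← Matrix.mul_assoc P⁻¹ P, hPP', Matrix.one_mul]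

lemma conj_pow' {P X : Matrix (Fin n) (Fin n) ℂ} (hPP : P * P⁻¹ = 1) (hPP' : P⁻¹ * P = 1)
    (k : ℕ) : P * X ^ k * P⁻¹ = (P * X * P⁻¹) ^ k := by
  induction k with
  | zero => simpa using hPP
  | succ k ih => rw [pow_succ, pow_succ, ← ih, conj_mul' hPP']

lemma eig_of_pow {A : Matrix (Fin n) (Fin n) ℂ} (hA : A.IsDiagonalizable)
    (μ : ℂ) (k : ℕ) (x : Fin n → ℂ) (h : ((A - μ • 1) ^ k) *ᵥ x = 0) :
    A *ᵥ x = μ • x := by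
  obtain ⟨P, hP, hD⟩ := hA
  have hPd : IsUnit P.det := (Matrix.isUnit_iff_isUnit_det P).mp hP
  set D := P * A * P⁻¹ with hDdef
  have hPP : P * P⁻¹ = 1 := Matrix.mul_nonsing_inv P hPd
  have hPP' : P⁻¹ * P = 1 := Matrix.nonsing_inv_mul P hPd
  set d := D.diag with hd
  have hDdiag : D = Matrix.diagonal d := (Matrix.IsDiag.diagonal_diag hD).symm
  have hconj : P * (A - μ • 1) * P⁻¹ = Matrix.diagonal (fun j => d j - μ) := by
    rw [Matrix.mul_sub, Matrix.sub_mul, ← hDdef, hDdiag]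
    rw [Matrix.mul_smul, Matrix.smul_mul, Matrix.mul_one, hPP,
      Matrix.smul_one_eq_diagonal, Matrix.diagonal_sub]
  have hy : (Matrix.diagonal (fun j => d j - μ) ^ k) *ᵥ (P *ᵥ x) = 0 := by
    rw [← hconj, ← conj_pow' hPP hPP', Matrix.mulVec_mulVec, Matrix.mul_assoc, hPP',
      Matrix.mul_one, ← Matrix.mulVec_mulVec, h, Matrix.mulVec_zero]
  have hy' : Matrix.diagonal (fun j => d j - μ) *ᵥ (P *ᵥ x) = 0 := by
    funext j
    have h1 := congrFun hy j
    rw [Matrix.diagonal_pow] at h1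
    simp only [Matrix.mulVec_diagonal, Pi.zero_apply, Pi.pow_apply] at h1 ⊢
    rcases mul_eq_zero.mp h1 with h0 | h0
    · obtain ⟨h2, -⟩ := pow_eq_zero_iff'.mp h0
      rw [h2, zero_mul]
    · rw [h0, mul_zero]
  have inv_conj : ∀ X : Matrix (Fin n) (Fin n) ℂ, P⁻¹ * (P * X * P⁻¹) * P = X := by
    intro X
    simp only [Matrix.mul_assoc, hPP', Matrix.mul_one]
    rw [← Matrix.mul_assoc, hPP', Matrix.one_mul]
  have heq : A - μ • 1 = P⁻¹ * Matrix.diagonal (fun j => d j - μ) * P := by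
    rw [← hconj, inv_conj]
  have hz : (A - μ • 1) *ᵥ x = 0 := by
    rw [heq, ← Matrix.mulVec_mulVec, ← Matrix.mulVec_mulVec, hy', Matrix.mulVec_zero]
  have hfin := Matrix.sub_mulVec A (μ • 1) x
  rw [hz, Matrix.smul_mulVec, Matrix.one_mulVec] at hfin
  exact sub_eq_zero.mp hfin.symm

lemma simul_diag (A : Fin m → Matrix (Fin n) (Fin n) ℂ)
    (hAd : ∀ i, (A i).IsDiagonalizable)
    (hAc : ∀ i j, A i * A j = A j * A i) :
    ∃ (P : Matrix (Fin n) (Fin n) ℂ) (v : Fin n → Fin m → ℂ),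
      IsUnit P ∧ ∀ i, A i = P * Matrix.diagonal (fun j => v j i) * P⁻¹ := by
  classical
  set f : Fin m → Module.End ℂ (Fin n → ℂ) := fun i => Matrix.mulVecLin (A i) with hf
  have hcomm : ∀ i j, Commute (f i) (f j) := by
    intro i j
    show f i * f j = f j * f i
    have : ∀ a b : Fin m, f a * f b = (A a * A b).mulVecLin := by
      intro a b
      ext x
      simp [hf, Matrix.mulVecLin_mul]
    rw [this, this, hAc]
  have hspan : ∀ i, ⨆ μ, (f i).maxGenEigenspace μ = ⊤ := fun i =>
    Module.End.iSup_maxGenEigenspace_eq_top (f i)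
  have htop : ⨆ χ : Fin m → ℂ, ⨅ i, (f i).maxGenEigenspace (χ i) = ⊤ :=
    Module.End.iSup_iInf_maxGenEigenspace_eq_top_of_iSup_maxGenEigenspace_eq_top_of_commute
      f (fun i j _ => hcomm i j) hspan
  have hind : iSupIndep fun χ : Fin m → ℂ => ⨅ i, (f i).maxGenEigenspace (χ i) :=
    Module.End.independent_iInf_maxGenEigenspace_of_forall_mapsTo f
      (fun i j φ => Module.End.mapsTo_maxGenEigenspace_of_comm (hcomm j i) φ)
  have hint : DirectSum.IsInternal fun χ : Fin m → ℂ => ⨅ i, (f i).maxGenEigenspace (χ i) :=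
    DirectSum.isInternal_submodule_of_iSupIndep_of_iSup_eq_top hind htop
  set E : (Fin m → ℂ) → Submodule ℂ (Fin n → ℂ) :=
    fun χ => ⨅ i, (f i).maxGenEigenspace (χ i) with hE
  let bE : ∀ χ, Module.Basis (Fin (Module.finrank ℂ (E χ))) ℂ (E χ) := fun χ => Module.finBasis ℂ (E χ)
  let b := hint.collectedBasis bE
  let e := b.indexEquiv (Pi.basisFun ℂ (Fin n))
  let c := b.reindex e
  set v : Fin n → Fin m → ℂ := fun j => (e.symm j).1 with hv
  have heig : ∀ j i, A i *ᵥ c j = v j i • c j := by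
    intro j i
    have hmem : (c j : Fin n → ℂ) ∈ E (v j) := by
      have h0 := hint.collectedBasis_mem bE (e.symm j)
      rw [hv]
      show ((b.reindex e) j : Fin n → ℂ) ∈ E (e.symm j).1
      rw [Module.Basis.reindex_apply]
      exact h0
    rw [hE, Module.End.mem_iInf_maxGenEigenspace_iff] at hmem
    obtain ⟨k, hk⟩ := hmem i
    refine eig_of_pow (hAd i) (v j i) k (c j) ?_
    have hpow : ∀ (M : Matrix (Fin n) (Fin n) ℂ) (l : ℕ), (M ^ l).mulVecLin = M.mulVecLin ^ l := by
      intro M l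
      induction l with
      | zero => rw [pow_zero, pow_zero, Matrix.mulVecLin_one]; rfl
      | succ l ih => rw [pow_succ, pow_succ, Matrix.mulVecLin_mul, ih]; rfl
    have heq1 : (f i - v j i • 1) = ((A i - v j i • 1)).mulVecLin := by
      refine LinearMap.ext fun x => ?_
      simp [hf, Matrix.sub_mulVec, Matrix.smul_mulVec, Matrix.one_mulVec]
    rw [heq1, ← hpow] at hk
    exact hk
  set P : Matrix (Fin n) (Fin n) ℂ := Matrix.of fun r j => c j r with hP
  have hPtm : P = (Pi.basisFun ℂ (Fin n)).toMatrix (⇑c) := by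
    ext r j
    simp [hP, Module.Basis.toMatrix_apply]
  have hunit : IsUnit P := by
    rw [hPtm]
    have := invertibleOfRightInverse _ _
      (Module.Basis.toMatrix_mul_toMatrix_flip (Pi.basisFun ℂ (Fin n)) c)
    exact isUnit_of_invertible _
  have hPd : IsUnit P.det := (Matrix.isUnit_iff_isUnit_det P).mp hunit
  refine ⟨P, v, hunit, fun i => ?_⟩
  have key : A i * P = P * Matrix.diagonal (fun j => v j i) := by
    ext r j
    rw [Matrix.mul_apply, Matrix.mul_diagonal]
    have := congrFun (heig j i) r
    simp only [Matrix.mulVec, dotProduct, Pi.smul_apply, smul_eq_mul] at this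
    simpa [hP, Matrix.mul_apply, mul_comm] using this
  calc A i = A i * P * P⁻¹ := by
        rw [Matrix.mul_assoc, Matrix.mul_nonsing_inv P hPd, Matrix.mul_one]
  _ = P * Matrix.diagonal (fun j => v j i) * P⁻¹ := by rw [key]

lemma prod_word_eq (d : Fin m →₀ ℕ) (x : Fin m → ℂ) :
    ∀ l : List (Fin m), l = d.toMultiset.toList →
    (∏ t : Fin l.length, x (l.get t)) = d.prod fun i e => x i ^ e := by
  intro l hl
  have h1 : (∏ t : Fin l.length, x (l.get t)) = (List.ofFn fun t => x (l.get t)).prod :=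
    List.prod_ofFn.symm
  have h2 : (List.ofFn fun t => x (l.get t)) = l.map x := by
    rw [show (fun t => x (l.get t)) = x ∘ l.get from rfl, ← List.map_ofFn, List.ofFn_get]
  rw [h1, h2]
  have h4 : ((l : Multiset (Fin m)).map x).prod = (l.map x).prod := by
    rw [Multiset.map_coe, Multiset.prod_coe]
  rw [← h4, hl, Multiset.coe_toList, Finsupp.toMultiset_map, Finsupp.prod_toMultiset]
  exact Finsupp.prod_mapDomain_index (fun b => pow_zero b) (fun b e1 e2 => pow_add b e1 e2)

lemma sums_eq_poly (v w : Fin n → Fin m → ℂ)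
    (hword : ∀ (k : ℕ), 0 < k → ∀ idx : Fin k → Fin m,
      ∑ j, ∏ t, v j (idx t) = ∑ j, ∏ t, w j (idx t))
    (p : MvPolynomial (Fin m) ℂ) :
    ∑ j, eval (v j) p = ∑ j, eval (w j) p := by
  have hmono : ∀ d : Fin m →₀ ℕ,
      (∑ j, d.prod fun i e => v j i ^ e) = ∑ j, d.prod fun i e => w j i ^ e := by
    intro d
    rcases eq_or_ne d 0 with rfl | hd
    · simp
    · set l : List (Fin m) := d.toMultiset.toList with hl
      obtain ⟨i0, hi0⟩ := Finsupp.ne_iff.mp hd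
      have hM : d.toMultiset ≠ 0 := fun h0 => hi0 (by
        rw [← Finsupp.count_toMultiset, h0]; simp)
      have hlen : 0 < l.length := by
        rw [hl, Multiset.length_toList, Multiset.card_pos]
        exact hM
      have key := hword l.length hlen l.get
      rw [Finset.sum_congr rfl fun j _ => (prod_word_eq d (v j) l hl).symm,
        Finset.sum_congr rfl fun j _ => (prod_word_eq d (w j) l hl).symm]
      exact key
  have hev : ∀ x : Fin n → Fin m → ℂ,
      ∑ j, eval (x j) p = ∑ d ∈ p.support, p.coeff d * ∑ j, (d.prod fun i e => x j i ^ e) := by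
    intro x
    have : ∀ j, eval (x j) p = ∑ d ∈ p.support, p.coeff d * (d.prod fun i e => x j i ^ e) := by
      intro j
      rw [eval_eq]
      rfl
    rw [Finset.sum_congr rfl fun j _ => this j, Finset.sum_comm]
    exact Finset.sum_congr rfl fun d _ => (Finset.mul_sum _ _ _).symm
  rw [hev v, hev w]
  exact Finset.sum_congr rfl fun d _ => by rw [hmono d]

lemma exists_perm (v w : Fin n → Fin m → ℂ)
    (hword : ∀ (k : ℕ), 0 < k → ∀ idx : Fin k → Fin m,
      ∑ j, ∏ t, v j (idx t) = ∑ j, ∏ t, w j (idx t)) :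
    ∃ σ : Equiv.Perm (Fin n), ∀ j, w j = v (σ j) := by
  classical
  have hpoly := sums_eq_poly v w hword
  set S : Finset (Fin m → ℂ) := Finset.univ.image v ∪ Finset.univ.image w with hS
  have hvS : ∀ j, v j ∈ S := fun j =>
    Finset.mem_union_left _ (Finset.mem_image_of_mem v (Finset.mem_univ j))
  have hwS : ∀ j, w j ∈ S := fun j =>
    Finset.mem_union_right _ (Finset.mem_image_of_mem w (Finset.mem_univ j))
  have hcount : ∀ u : Fin m → ℂ,
      (Finset.univ.filter fun j => v j = u).card =
      (Finset.univ.filter fun j => w j = u).card := by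
    intro u
    by_cases hu : u ∈ S
    · have hsep : ∀ s ∈ S.erase u, ∃ i, u i ≠ s i := by
        intro s hs
        exact Function.ne_iff.mp (Finset.ne_of_mem_erase hs).symm
      choose idx hidx using hsep
      set p : MvPolynomial (Fin m) ℂ :=
        ∏ s ∈ (S.erase u).attach,
          (C (u (idx s.1 s.2) - s.1 (idx s.1 s.2))⁻¹ * (X (idx s.1 s.2) - C (s.1 (idx s.1 s.2))))
        with hp
      have hev : ∀ x : Fin m → ℂ, eval x p =
          ∏ s ∈ (S.erase u).attach,
            (u (idx s.1 s.2) - s.1 (idx s.1 s.2))⁻¹ * (x (idx s.1 s.2) - s.1 (idx s.1 s.2)) := by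
        intro x
        rw [hp, map_prod]
        exact Finset.prod_congr rfl fun s _ => by simp
      have hevalS : ∀ x, x ∈ S → eval x p = if x = u then 1 else 0 := by
        intro x hx
        by_cases hxu : x = u
        · subst hxu
          rw [if_pos rfl, hev]
          refine Finset.prod_eq_one fun s _ => ?_
          exact inv_mul_cancel₀ (sub_ne_zero.mpr (hidx s.1 s.2))
        · rw [if_neg hxu, hev]
          refine Finset.prod_eq_zero (Finset.mem_attach _ ⟨x, Finset.mem_erase.mpr ⟨hxu, hx⟩⟩) ?_
          simp
      have hsum : ∀ x : Fin n → Fin m → ℂ, (∀ j, x j ∈ S) →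
          ∑ j, eval (x j) p = ((Finset.univ.filter fun j => x j = u).card : ℂ) := by
        intro x hx
        rw [Finset.sum_congr rfl fun j _ => hevalS (x j) (hx j)]
        rw [Finset.sum_boole]
      have := hpoly p
      rw [hsum v hvS, hsum w hwS] at this
      exact_mod_cast this
    · have h1 : (Finset.univ.filter fun j => v j = u) = ∅ :=
        Finset.filter_eq_empty_iff.mpr (by intro j _ hj; exact hu (hj ▸ hvS j))
      have h2 : (Finset.univ.filter fun j => w j = u) = ∅ :=
        Finset.filter_eq_empty_iff.mpr (by intro j _ hj; exact hu (hj ▸ hwS j))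
      rw [h1, h2]
  have hfib : ∀ u : Fin m → ℂ, { a // w a = u } ≃ { b // v b = u } := by
    intro u
    refine Fintype.equivOfCardEq ?_
    rw [Fintype.card_subtype, Fintype.card_subtype, hcount u]
  exact ⟨Equiv.ofFiberEquiv hfib, fun j => (Equiv.ofFiberEquiv_map hfib j).symm⟩

/-- permutation matrix -/
noncomputable def permM (τ : Equiv.Perm (Fin n)) : Matrix (Fin n) (Fin n) ℂ :=
  Matrix.of fun a b => if τ b = a then 1 else 0

lemma permM_mul_apply (τ : Equiv.Perm (Fin n)) (M : Matrix (Fin n) (Fin n) ℂ) (a b : Fin n) :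
    (permM τ * M) a b = M (τ.symm a) b := by
  rw [Matrix.mul_apply]
  have hs : ∀ s, permM τ a s * M s b = if s = τ.symm a then M s b else 0 := by
    intro s
    simp only [permM, Matrix.of_apply, ite_mul, one_mul, zero_mul]
    exact if_congr (by rw [Equiv.apply_eq_iff_eq_symm_apply]) rfl rfl
  rw [Finset.sum_congr rfl fun s _ => hs s,
    Finset.sum_ite_eq' Finset.univ (τ.symm a) (fun s => M s b), if_pos (Finset.mem_univ _)]

lemma mul_permM_apply (τ : Equiv.Perm (Fin n)) (M : Matrix (Fin n) (Fin n) ℂ) (a b : Fin n) :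
    (M * permM τ) a b = M a (τ b) := by
  rw [Matrix.mul_apply]
  have hs : ∀ s, M a s * permM τ s b = if s = τ b then M a s else 0 := by
    intro s
    simp only [permM, Matrix.of_apply, mul_ite, mul_one, mul_zero]
    exact if_congr (by rw [eq_comm]) rfl rfl
  rw [Finset.sum_congr rfl fun s _ => hs s,
    Finset.sum_ite_eq' Finset.univ (τ b) (fun s => M a s), if_pos (Finset.mem_univ _)]

lemma permM_mul_permM (σ : Equiv.Perm (Fin n)) : permM σ.symm * permM σ = 1 := by
  ext a b
  rw [permM_mul_apply]
  simp only [permM, Equiv.symm_symm, Matrix.of_apply, Matrix.one_apply]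
  exact if_congr (by rw [Equiv.apply_eq_iff_eq, eq_comm]) rfl rfl

lemma permM_mul_permM' (σ : Equiv.Perm (Fin n)) : permM σ * permM σ.symm = 1 := by
  have := permM_mul_permM σ.symm
  rwa [Equiv.symm_symm] at this

lemma perm_diag (σ : Equiv.Perm (Fin n)) (d : Fin n → ℂ) :
    permM σ.symm * Matrix.diagonal d * permM σ = Matrix.diagonal (fun j => d (σ j)) := by
  ext a b
  rw [mul_permM_apply, permM_mul_apply, Equiv.symm_symm]
  simp only [Matrix.diagonal_apply]
  exact if_congr (by rw [Equiv.apply_eq_iff_eq]) rfl rfl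

lemma conj_list_prod {P : Matrix (Fin n) (Fin n) ℂ} (hPP : P * P⁻¹ = 1) (hPP' : P⁻¹ * P = 1)
    (L : List (Matrix (Fin n) (Fin n) ℂ)) :
    (L.map fun M => P * M * P⁻¹).prod = P * L.prod * P⁻¹ := by
  induction L with
  | nil => simp only [List.map_nil, List.prod_nil, Matrix.mul_one]; exact hPP.symm
  | cons a L ih => rw [List.map_cons, List.prod_cons, List.prod_cons, ih, conj_mul' hPP']

lemma diag_list_prod (L : List (Fin n → ℂ)) :
    (L.map Matrix.diagonal).prod = Matrix.diagonal (fun j => (L.map fun d => d j).prod) := by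
  induction L with
  | nil => simp [Matrix.diagonal_one]
  | cons a L ih =>
    rw [List.map_cons, List.prod_cons, ih, Matrix.diagonal_mul_diagonal]
    congr 1

lemma trace_word {P : Matrix (Fin n) (Fin n) ℂ} (hPP : P * P⁻¹ = 1) (hPP' : P⁻¹ * P = 1)
    {k : ℕ} (u : Fin n → Fin m → ℂ) (idx : Fin k → Fin m) :
    Matrix.trace ((List.ofFn fun t => P * Matrix.diagonal (fun j => u j (idx t)) * P⁻¹).prod)
      = ∑ j, ∏ t, u j (idx t) := by
  have h1 : (List.ofFn fun t => P * Matrix.diagonal (fun j => u j (idx t)) * P⁻¹)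
      = ((List.ofFn fun t => (fun j => u j (idx t))).map Matrix.diagonal).map
          (fun M => P * M * P⁻¹) := by
    rw [List.map_ofFn, List.map_ofFn]
    rfl
  rw [h1, conj_list_prod hPP hPP', diag_list_prod, Matrix.trace_mul_cycle, hPP',
    Matrix.one_mul, Matrix.trace_diagonal]
  refine Finset.sum_congr rfl fun j _ => ?_
  rw [List.map_ofFn]
  exact List.prod_ofFn

end GenTraceAux

open GenTraceAux

/-- Two commuting tuples of diagonalizable matrices with equal generalized traces are
simultaneously conjugate. -/
theorem exists_conj_of_generalized_traces_eq {m n : ℕ}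
    (A B : Fin m → Matrix (Fin n) (Fin n) ℂ)
    (hAd : ∀ i, (A i).IsDiagonalizable) (hBd : ∀ i, (B i).IsDiagonalizable)
    (hAc : ∀ i j, A i * A j = A j * A i) (hBc : ∀ i j, B i * B j = B j * B i)
    (h : ∀ (k : ℕ), 0 < k → ∀ idx : Fin k → Fin m,
      Matrix.trace ((List.ofFn fun t => A (idx t)).prod) =
        Matrix.trace ((List.ofFn fun t => B (idx t)).prod)) :
    ∃ g : Matrix (Fin n) (Fin n) ℂ, IsUnit g ∧ ∀ i, B i = g * A i * g⁻¹ := by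
  classical
  obtain ⟨P, v, hPu, hPA⟩ := simul_diag A hAd hAc
  obtain ⟨Q, w, hQu, hQB⟩ := simul_diag B hBd hBc
  have hPd : IsUnit P.det := (Matrix.isUnit_iff_isUnit_det P).mp hPu
  have hQd : IsUnit Q.det := (Matrix.isUnit_iff_isUnit_det Q).mp hQu
  have hPP : P * P⁻¹ = 1 := Matrix.mul_nonsing_inv P hPd
  have hPP' : P⁻¹ * P = 1 := Matrix.nonsing_inv_mul P hPd
  have hQQ : Q * Q⁻¹ = 1 := Matrix.mul_nonsing_inv Q hQd
  have hQQ' : Q⁻¹ * Q = 1 := Matrix.nonsing_inv_mul Q hQd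
  have hword : ∀ (k : ℕ), 0 < k → ∀ idx : Fin k → Fin m,
      ∑ j, ∏ t, v j (idx t) = ∑ j, ∏ t, w j (idx t) := by
    intro k hk idx
    have hh := h k hk idx
    simp only [hPA, hQB] at hh
    rwa [trace_word hPP hPP' v idx, trace_word hQQ hQQ' w idx] at hh
  obtain ⟨σ, hσ⟩ := exists_perm v w hword
  -- cancellation helper
  have cancel : ∀ {X Y : Matrix (Fin n) (Fin n) ℂ}, X * Y = 1 →
      ∀ Z : Matrix (Fin n) (Fin n) ℂ, X * (Y * Z) = Z := by
    intro X Y hXY Z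
    rw [← Matrix.mul_assoc, hXY, Matrix.one_mul]
  set R : Matrix (Fin n) (Fin n) ℂ := permM σ.symm with hR
  set R' : Matrix (Fin n) (Fin n) ℂ := permM σ with hR'
  have hRR' : R * R' = 1 := permM_mul_permM σ
  have hR'R : R' * R = 1 := permM_mul_permM' σ
  set g : Matrix (Fin n) (Fin n) ℂ := Q * R * P⁻¹ with hg
  set g' : Matrix (Fin n) (Fin n) ℂ := P * R' * Q⁻¹ with hg'
  have hgg' : g * g' = 1 := by
    rw [hg, hg']
    simp only [Matrix.mul_assoc]
    rw [cancel hPP', cancel hRR', hQQ]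
  have hg'g : g' * g = 1 := by
    rw [hg, hg']
    simp only [Matrix.mul_assoc]
    rw [cancel hQQ', cancel hR'R, hPP]
  have hgu : IsUnit g := by
    have := invertibleOfRightInverse _ _ hgg'
    exact isUnit_of_invertible _
  have hginv : g⁻¹ = g' := Matrix.inv_eq_right_inv hgg'
  refine ⟨g, hgu, fun i => ?_⟩
  rw [hginv, hQB i, hPA i, hg, hg']
  have hdiag : R * Matrix.diagonal (fun j => v j i) * R' =
      Matrix.diagonal (fun j => w j i) := by
    have hfun : (fun j => v (σ j) i) = (fun j => w j i) :=
      funext fun j => (congrFun (hσ j) i).symm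
    rw [hR, hR', perm_diag σ (fun j => v j i), hfun]
  rw [← hdiag]
  simp only [Matrix.mul_assoc]
  rw [cancel hPP', cancel hPP']
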